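/- Let d ≥ 2, γ ≥ 0 and τ ≥ 0 be an integer. For j ∈ {1,…,d} define s_j(τ) = Σ_{y ∈ {0,1}^d : y_j = 1} 2 P(Y = y)/(τ + Σ_i y_i + γ). Then for any two distinct indices j ≠ j': s_j(τ) − s_{j'}(τ) = 2 (p_j − p_{j'}) · Σ_{y ∈ {0,1}^d : y_j = y_{j'} = 0} (∏_{i ≠ j, j'} P(Y_i = y_i)) / (τ + 1 + Σ_{i ≠ j, j'} y_i + γ). In particular, the multiplying sum is strictly positive, so s_j(τ) ≥ s_{j'}(τ) if and only if p_j ≥ p_{j'}. -/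
import Mathlib


open Finset

/-- Weight of a binary configuration `y` under independent Bernoulli probabilities `p`:
`P(Y = y) = ∏ⱼ pⱼ^{yⱼ} (1-pⱼ)^{1-yⱼ}`. -/
noncomputable def bw {d : ℕ} (p : Fin d → ℝ) (y : Fin d → Bool) : ℝ :=
  ∏ j, if y j = true then p j else 1 - p j

/-- Number of `true` coordinates of `y`. -/
def cnt {d : ℕ} (y : Fin d → Bool) : ℕ :=
  (Finset.univ.filter (fun j => y j = true)).card

/-- `s_j(τ) = Σ_{y : y_j = 1} 2 P(Y = y)/(τ + Σᵢ yᵢ + γ)`. -/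
noncomputable def sfun {d : ℕ} (γ : ℝ) (τ : ℕ) (p : Fin d → ℝ) (j : Fin d) : ℝ :=
  ∑ y : Fin d → Bool,
    if y j = true then 2 * bw p y / ((τ : ℝ) + (cnt y : ℝ) + γ) else 0

/-- The sum multiplying `2 (p_j - p_{j'})` in the difference `s_j(τ) - s_{j'}(τ)`:
`Σ_{y : y_j = y_{j'} = 0} (∏_{i ≠ j, j'} P(Yᵢ = yᵢ)) / (τ + 1 + Σ_{i ≠ j,j'} yᵢ + γ)`. -/
noncomputable def diffFactor {d : ℕ} (γ : ℝ) (τ : ℕ) (p : Fin d → ℝ) (j j' : Fin d) : ℝ :=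
  ∑ y : Fin d → Bool,
    if y j = false ∧ y j' = false then
      (∏ i ∈ (Finset.univ.erase j).erase j', (if y i = true then p i else 1 - p i)) /
        ((τ : ℝ) + 1 + (cnt y : ℝ) + γ)
    else 0

lemma cnt_comp {d : ℕ} (σ : Equiv.Perm (Fin d)) (y : Fin d → Bool) :
    cnt (fun i => y (σ i)) = cnt y := by
  unfold cnt
  rw [Finset.card_filter, Finset.card_filter]
  exact Fintype.sum_equiv σ _ _ (fun i => rfl)

lemma cnt_update_true {d : ℕ} (y : Fin d → Bool) (j : Fin d) (hy : y j = false) :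
    cnt (Function.update y j true) = cnt y + 1 := by
  unfold cnt
  rw [show (univ.filter fun i => Function.update y j true i = true)
      = insert j (univ.filter fun i => y i = true) from ?_,
    Finset.card_insert_of_notMem (by simp [hy])]
  ext i
  by_cases h : i = j <;> simp [h, Function.update_apply, hy]

lemma prod_split {d : ℕ} {j j' : Fin d} (h : j ≠ j') (f : Fin d → ℝ) :
    ∏ i, f i = f j * f j' * ∏ i ∈ (univ.erase j).erase j', f i := by
  rw [mul_assoc, Finset.mul_prod_erase _ f (Finset.mem_erase.2 ⟨h.symm, mem_univ j'⟩),
    Finset.mul_prod_erase univ f (mem_univ j)]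

lemma bw_comp_swap {d : ℕ} (p : Fin d → ℝ) {j j' : Fin d} (h : j ≠ j') (y : Fin d → Bool) :
    bw p (fun i => y (Equiv.swap j j' i)) =
      (if y j = true then p j' else 1 - p j') * (if y j' = true then p j else 1 - p j) *
        ∏ i ∈ (univ.erase j).erase j', (if y i = true then p i else 1 - p i) := by
  unfold bw
  have h1 : ∏ i, (if y (Equiv.swap j j' i) = true then p i else 1 - p i)
      = ∏ i, (if y i = true then p (Equiv.swap j j' i) else 1 - p (Equiv.swap j j' i)) := by
    refine (Fintype.prod_equiv (Equiv.swap j j') _ _ (fun i => ?_)).symm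
    rw [Equiv.swap_apply_self]
  rw [h1, prod_split h]
  rw [Equiv.swap_apply_left, Equiv.swap_apply_right]
  congr 1
  refine Finset.prod_congr rfl (fun i hi => ?_)
  simp only [Finset.mem_erase] at hi
  rw [Equiv.swap_apply_of_ne_of_ne hi.2.1 hi.1]

lemma bw_sub {d : ℕ} (p : Fin d → ℝ) {j j' : Fin d} (h : j ≠ j') (y : Fin d → Bool)
    (h1 : y j = true) (h2 : y j' = false) :
    bw p y - bw p (fun i => y (Equiv.swap j j' i)) =
      (p j - p j') * ∏ i ∈ (univ.erase j).erase j', (if y i = true then p i else 1 - p i) := by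
  rw [bw_comp_swap p h y, bw, prod_split h, h1, h2]
  simp only [Bool.false_eq_true, if_false, if_true]
  ring

lemma bw_comp_swap_eq {d : ℕ} (p : Fin d → ℝ) {j j' : Fin d} (y : Fin d → Bool)
    (h12 : y j = y j') :
    bw p (fun i => y (Equiv.swap j j' i)) = bw p y := by
  congr 1
  funext i
  by_cases hij : i = j
  · simp [hij, Equiv.swap_apply_left, h12]
  · by_cases hij' : i = j'
    · simp [hij', Equiv.swap_apply_right, h12]
    · rw [Equiv.swap_apply_of_ne_of_ne hij hij']

/-- Difference of the scores `s_j(τ)` for two distinct indices: it factorizes through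
`p_j - p_{j'}` times a strictly positive sum, hence `s_j(τ) ≥ s_{j'}(τ) ↔ p_j ≥ p_{j'}`. -/
theorem sfun_diff {d : ℕ} (hd : 2 ≤ d) (γ : ℝ) (hγ : 0 ≤ γ) (τ : ℕ)
    (p : Fin d → ℝ) (hp : ∀ i, p i ∈ Set.Icc (0 : ℝ) 1)
    (j j' : Fin d) (hjj : j ≠ j') :
    sfun γ τ p j - sfun γ τ p j' = 2 * (p j - p j') * diffFactor γ τ p j j' ∧
    0 < diffFactor γ τ p j j' ∧
    (p j' ≤ p j ↔ sfun γ τ p j' ≤ sfun γ τ p j) := by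
  classical
  -- Key identity
  have key : sfun γ τ p j - sfun γ τ p j' = 2 * (p j - p j') * diffFactor γ τ p j j' := by
    have hA : sfun γ τ p j' = ∑ y : Fin d → Bool,
        if y j = true then
          2 * bw p (fun i => y (Equiv.swap j j' i)) / ((τ : ℝ) + (cnt y : ℝ) + γ)
        else 0 := by
      unfold sfun
      have minv : Function.Involutive (fun (y : Fin d → Bool) i => y (Equiv.swap j j' i)) :=
        fun y => by funext i; simp [Equiv.swap_apply_self]
      refine (Fintype.sum_bijective _ minv.bijective _ _ (fun y => ?_)).symm
      simp only [Equiv.swap_apply_right, cnt_comp]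
    rw [sfun, hA, ← Finset.sum_sub_distrib]
    have hstep : ∀ y : Fin d → Bool,
        ((if y j = true then 2 * bw p y / ((τ : ℝ) + (cnt y : ℝ) + γ) else 0)
          - (if y j = true then
              2 * bw p (fun i => y (Equiv.swap j j' i)) / ((τ : ℝ) + (cnt y : ℝ) + γ) else 0))
        = if y j = true ∧ y j' = false then
            2 * (p j - p j') *
              (∏ i ∈ (univ.erase j).erase j', (if y i = true then p i else 1 - p i))
              / ((τ : ℝ) + (cnt y : ℝ) + γ)
          else 0 := by
      intro y
      by_cases h1 : y j = true
      · by_cases h2 : y j' = false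
        · simp only [h1, h2, if_true, and_self, if_pos]
          rw [div_sub_div_same,
            show 2 * bw p y - 2 * bw p (fun i => y (Equiv.swap j j' i))
                = 2 * (p j - p j') *
                    ∏ i ∈ (univ.erase j).erase j', (if y i = true then p i else 1 - p i) by
              rw [mul_assoc, ← bw_sub p hjj y h1 h2]; ring]
        · have h2' : y j' = true := by
            cases hy : y j' with
            | false => exact absurd hy h2
            | true => rfl
          rw [bw_comp_swap_eq p y (h1.trans h2'.symm)]
          simp [h1, h2]
      · simp [h1]
    rw [Finset.sum_congr rfl (fun y _ => hstep y)]
    rw [diffFactor, Finset.mul_sum]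
    have φinv : Function.Involutive (fun (y : Fin d → Bool) => Function.update y j (!(y j))) :=
      fun y => by
        funext i
        by_cases h : i = j
        · subst h; simp [Function.update_apply]
        · simp [Function.update_apply, h]
    have hRupd : ∀ (y : Fin d → Bool) (b : Bool),
        (∏ i ∈ (univ.erase j).erase j',
            (if Function.update y j b i = true then p i else 1 - p i))
        = ∏ i ∈ (univ.erase j).erase j', (if y i = true then p i else 1 - p i) := by
      intro y b
      refine Finset.prod_congr rfl (fun i hi => ?_)
      simp only [Finset.mem_erase] at hi
      rw [Function.update_of_ne hi.2.1]
    refine (Fintype.sum_bijective _ φinv.bijective _ _ (fun y => ?_)).symm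
    by_cases h1 : y j = false
    · by_cases h2 : y j' = false
      · simp only [h1, h2, and_self, if_true, Bool.not_false, Function.update_self,
          Function.update_of_ne (Ne.symm hjj), and_true, true_and]
        rw [hRupd y true, cnt_update_true y j h1]
        push_cast
        ring
      · simp [h1, h2, Bool.not_false, Function.update_self,
          Function.update_of_ne (Ne.symm hjj)]
    · have h1' : y j = true := by
        cases hy : y j with
        | false => exact absurd hy h1
        | true => rfl
      simp [h1', Function.update_self]
  -- positivity of diffFactor
  have hden : ∀ y : Fin d → Bool, (0:ℝ) < (τ : ℝ) + 1 + (cnt y : ℝ) + γ := by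
    intro y; positivity
  have hpos : 0 < diffFactor γ τ p j j' := by
    rw [diffFactor]
    apply Finset.sum_pos'
    · intro y _
      split_ifs with h
      · apply div_nonneg _ (hden y).le
        exact Finset.prod_nonneg fun i _ => by
          split_ifs
          · exact (hp i).1
          · linarith [(hp i).2]
      · exact le_refl 0
    · refine ⟨(fun i => if i = j ∨ i = j' then false else if 0 < p i then true else false),
        mem_univ _, ?_⟩
      rw [if_pos ⟨by simp, by simp⟩]
      apply div_pos _ (hden _)
      apply Finset.prod_pos
      intro i hi
      simp only [Finset.mem_erase] at hi
      have hne : ¬(i = j ∨ i = j') := by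
        push_neg
        exact ⟨hi.2.1, hi.1⟩
      simp only [hne, if_false]
      by_cases hpi : 0 < p i
      · rw [if_pos hpi]
        simpa using hpi
      · rw [if_neg hpi]
        have h0 := (hp i).1
        have hple : p i ≤ 0 := not_lt.1 hpi
        simp only [Bool.false_eq_true, if_false]
        linarith
  refine ⟨key, hpos, ?_⟩
  constructor
  · intro hle
    have h0 : 0 ≤ sfun γ τ p j - sfun γ τ p j' := by
      rw [key]; nlinarith [hpos]
    linarith
  · intro hle
    have h0 : 0 ≤ 2 * (p j - p j') * diffFactor γ τ p j j' := by
      rw [← key]; linarith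
    nlinarith [hpos]
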